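/- Under the double-estimator scheme, where $h^* = \operatorname{argmax}_h (V_h + \epsilon^{(1)}_{h})$ is selected using noise from the first estimator but the value reported is $V_{h^*} + \epsilon^{(2)}_{h^*}$ using independent zero-mean noise from the second estimator, the expected reported value does not exceed the true maximum: $\mathbb{E}[V_{h^*} + \epsilon^{(2)}_{h^*}] \leq \max_h V_h$. -/

import Mathlib

open MeasureTheory ProbabilityTheory

/-- Double-estimator scheme: selecting the argmax using noise from a first estimator and
evaluating with independent zero-mean noise from a second estimator does not overestimate
the true maximum in expectation. -/
theorem double_estimator_no_overestimate
    {Ω : Type*} [MeasurableSpace Ω] (μ : Measure Ω) [IsProbabilityMeasure μ]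
    (n : ℕ) (hn : 1 ≤ n) (V : Fin n → ℝ) (ε₁ ε₂ : Fin n → Ω → ℝ)
    (hmeas₁ : ∀ h, Measurable (ε₁ h)) (hmeas₂ : ∀ h, Measurable (ε₂ h))
    (hint₂ : ∀ h, Integrable (ε₂ h) μ)
    (hmean₂ : ∀ h, ∫ ω, ε₂ h ω ∂μ = 0)
    (hstar : Ω → Fin n) (hstar_meas : Measurable hstar)
    (hargmax : ∀ ω h, V h + ε₁ h ω ≤ V (hstar ω) + ε₁ (hstar ω) ω)
    (hindep_fam : IndepFun (fun ω h => ε₂ h ω) (fun ω h => ε₁ h ω) μ)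
    (hindep_sel : IndepFun (fun ω h => ε₂ h ω) hstar μ) :
    ∫ ω, (V (hstar ω) + ε₂ (hstar ω) ω) ∂μ ≤ ⨆ h, V h := by
  haveI : Nonempty (Fin n) := ⟨⟨0, hn⟩⟩
  have hVle : ∀ h, V h ≤ ⨆ h, V h := fun h =>
    le_ciSup (Set.Finite.bddAbove (Set.finite_range V)) h
  set A : Fin n → Set Ω := fun h => hstar ⁻¹' {h} with hA
  have hAmeas : ∀ h, MeasurableSet (A h) := fun h =>
    hstar_meas (measurableSet_singleton h)
  -- decomposition
  have hdec : ∀ ω, V (hstar ω) + ε₂ (hstar ω) ω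
      = ∑ h : Fin n, (A h).indicator (fun ω' => V h + ε₂ h ω') ω := by
    intro ω
    have : ∀ h : Fin n, (A h).indicator (fun ω' => V h + ε₂ h ω') ω
        = if hstar ω = h then V h + ε₂ h ω else 0 := by
      intro h
      by_cases hω : hstar ω = h <;> simp [Set.indicator_apply, hA, hω]
    simp only [this]
    rw [Finset.sum_ite_eq Finset.univ (hstar ω) (fun h => V h + ε₂ h ω)]
    simp
  -- each indicator piece integrable
  have hintpiece : ∀ h : Fin n,
      Integrable ((A h).indicator (fun ω' => V h + ε₂ h ω')) μ := fun h =>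
    (((integrable_const (V h)).add (hint₂ h)).indicator (hAmeas h))
  -- integral of ε₂ part vanishes
  have hzero : ∀ h : Fin n, ∫ ω, (A h).indicator (ε₂ h) ω ∂μ = 0 := by
    intro h
    have hind : IndepFun (ε₂ h) (fun ω => (A h).indicator (fun _ => (1:ℝ)) ω) μ := by
      have h1 : Measurable (fun v : Fin n → ℝ => v h) := measurable_pi_apply h
      have h2 : Measurable (fun j : Fin n => if j = h then (1:ℝ) else 0) :=
        measurable_of_countable _
      have := hindep_sel.comp h1 h2
      convert this using 2 with ω
      · rfl
      by_cases hω : hstar ω = h <;> simp [Set.indicator_apply, hA, hω, Function.comp]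
    have heq : (fun ω => (A h).indicator (ε₂ h) ω)
        = ε₂ h * fun ω => (A h).indicator (fun _ => (1:ℝ)) ω := by
      funext ω
      by_cases hω : ω ∈ A h <;> simp [Set.indicator_apply, hω]
    rw [heq, hind.integral_mul_eq_mul_integral (hint₂ h).aestronglyMeasurable
      ((integrable_const (1:ℝ)).indicator (hAmeas h)).aestronglyMeasurable, hmean₂ h, zero_mul]
  -- integral of each piece
  have hpiece_le : ∀ h : Fin n,
      ∫ ω, (A h).indicator (fun ω' => V h + ε₂ h ω') ω ∂μ
        ≤ (⨆ h, V h) * (μ (A h)).toReal := by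
    intro h
    have hsplit : (A h).indicator (fun ω' => V h + ε₂ h ω')
        = fun ω => (A h).indicator (fun _ => V h) ω + (A h).indicator (ε₂ h) ω := by
      funext ω
      by_cases hω : ω ∈ A h <;> simp [Set.indicator_apply, hω]
    rw [hsplit, integral_add ((integrable_const (V h)).indicator (hAmeas h))
      ((hint₂ h).indicator (hAmeas h)), hzero h, add_zero,
      integral_indicator_const _ (hAmeas h)]
    simp only [smul_eq_mul]
    rw [mul_comm]
    exact mul_le_mul_of_nonneg_right (hVle h) ENNReal.toReal_nonneg
  calc ∫ ω, (V (hstar ω) + ε₂ (hstar ω) ω) ∂μ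
      = ∫ ω, ∑ h : Fin n, (A h).indicator (fun ω' => V h + ε₂ h ω') ω ∂μ := by
        simp_rw [hdec]
    _ = ∑ h : Fin n, ∫ ω, (A h).indicator (fun ω' => V h + ε₂ h ω') ω ∂μ :=
        integral_finset_sum _ (fun h _ => hintpiece h)
    _ ≤ ∑ h : Fin n, (⨆ h, V h) * (μ (A h)).toReal :=
        Finset.sum_le_sum (fun h _ => hpiece_le h)
    _ = (⨆ h, V h) * ∑ h : Fin n, (μ (A h)).toReal := by rw [Finset.mul_sum]
    _ = ⨆ h, V h := by
        have : ∑ h : Fin n, (μ (A h)).toReal = 1 := by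
          rw [← ENNReal.toReal_sum (fun h _ => measure_ne_top μ _)]
          have hdisj : Pairwise (Function.onFun Disjoint A) := by
            intro i j hij
            apply Set.disjoint_left.mpr
            intro ω hi hj
            exact hij (by simp [hA, Set.mem_preimage] at hi hj; rw [← hi, ← hj])
          have huniv : (⋃ h : Fin n, A h) = Set.univ := by
            ext ω; simp [hA, Set.mem_preimage]
          have : ∑ h : Fin n, μ (A h) = 1 := by
            rw [← tsum_fintype (L := SummationFilter.unconditional _), ← measure_iUnion hdisj (fun h => hAmeas h), huniv,
              measure_univ]
          rw [this, ENNReal.toReal_one]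
        rw [this, mul_one]
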